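/- Let R be a graded commutative 2-ring, S a homogeneous multiplicative system in R, and F : R → A an R-algebra (an additive symmetric monoidal functor to a preadditive symmetric monoidal category A with tensor product additive in each variable). Let S_A be the smallest class of morphisms of A containing F(S) and all isomorphisms of A and closed under composition and under tensoring with identity morphisms of objects of A, and let loc_R : R → S⁻¹R and loc_A : A → S_A⁻¹A be the localizations (which exist by the calculus of fractions). Let F̄ : S⁻¹R → S_A⁻¹A be the unique functor with F̄ ∘ loc_R = loc_A ∘ F. If F is full then F̄ is full, and if F is fully faithful then F̄ is fully faithful. -/

import Mathlib

open CategoryTheory CategoryTheory.Limits CategoryTheory.MonoidalCategory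

universe w v u v' u' v'' u''

/-- A *graded commutative 2-ring*: an essentially small preadditive symmetric monoidal
category whose tensor product is additive in each variable and in which every object
is invertible for the tensor product. -/
class GradedComm2Ring (C : Type u) [Category.{v} C] [Preadditive C] [MonoidalCategory C]
    [SymmetricCategory C] [MonoidalPreadditive C] : Prop where
  essentiallySmall : EssentiallySmall.{v} C
  invertible : ∀ g : C, ∃ g' : C, Nonempty (g ⊗ g' ≅ 𝟙_ C)
section TranslateDef

variable {C : Type u} [Category.{v} C] [MonoidalCategory C]

/-- `Translate r r'` says that `r'` is a *translate* of `r`: it is obtained from `r`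
by a finite sequence of the operations of tensoring with an identity morphism
(on either side) and of composing with an isomorphism (on either side). -/
inductive Translate : ∀ {g h g' h' : C}, (g ⟶ h) → (g' ⟶ h') → Prop
  | refl {g h : C} (r : g ⟶ h) : Translate r r
  | whiskerLeft {g h g' h' : C} {r : g ⟶ h} {r' : g' ⟶ h'} (ℓ : C) :
      Translate r r' → Translate r (ℓ ◁ r')
  | whiskerRight {g h g' h' : C} {r : g ⟶ h} {r' : g' ⟶ h'} (ℓ : C) :
      Translate r r' → Translate r (r' ▷ ℓ)
  | compIsoLeft {g h g' h' h'' : C} {r : g ⟶ h} {r' : g' ⟶ h'} (u : h' ≅ h'') :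
      Translate r r' → Translate r (r' ≫ u.hom)
  | compIsoRight {g h g' h' g'' : C} {r : g ⟶ h} {r' : g' ⟶ h'} (u : g'' ≅ g') :
      Translate r r' → Translate r (u.hom ≫ r')

end TranslateDef
section MulSysDef

variable {C : Type u} [Category.{v} C] [MonoidalCategory C]

/-- A *homogeneous multiplicative system*: a class of morphisms containing all
isomorphisms and closed under composition and under taking translates. -/
structure IsHomMulSystem (S : MorphismProperty C) : Prop where
  iso_mem : ∀ {g h : C} (f : g ⟶ h), IsIso f → S f
  comp_mem : ∀ {g h l : C} (f : g ⟶ h) (f' : h ⟶ l), S f → S f' → S (f ≫ f')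
  translate_mem : ∀ {g h g' h' : C} (f : g ⟶ h) (f' : g' ⟶ h'),
      S f → Translate f f' → S f'

end MulSysDef
section ExtDef

variable {C : Type u} [Category.{v} C] [MonoidalCategory C]
  {A : Type u'} [Category.{v'} A] [MonoidalCategory A]

/-- The smallest class of morphisms of `A` containing the image `F(S)`, containing all
isomorphisms of `A`, and closed under composition and under tensoring with identity
morphisms of objects of `A`. -/
inductive ExtMem (F : C ⥤ A) (S : MorphismProperty C) : ∀ {x y : A}, (x ⟶ y) → Prop
  | of {g h : C} (s : g ⟶ h) : S s → ExtMem F S (F.map s)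
  | iso {x y : A} (f : x ⟶ y) : IsIso f → ExtMem F S f
  | comp {x y z : A} (f : x ⟶ y) (g : y ⟶ z) :
      ExtMem F S f → ExtMem F S g → ExtMem F S (f ≫ g)
  | whiskerLeft {x y : A} (z : A) (f : x ⟶ y) : ExtMem F S f → ExtMem F S (z ◁ f)
  | whiskerRight {x y : A} (z : A) (f : x ⟶ y) : ExtMem F S f → ExtMem F S (f ▷ z)

/-- The extension `S_A` of a multiplicative system `S` of `C` along `F : C ⥤ A`. -/
def extSystem (F : C ⥤ A) (S : MorphismProperty C) : MorphismProperty A :=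
  fun _ _ f => ExtMem F S f

end ExtDef

universe v₃ u₃
/- ===== ZigDual machinery ===== -/
section ZigDualSec
variable {A : Type*} [Category A] [MonoidalCategory A]

structure ZigDual (W : A) where
  dual : A
  e : W ⊗ dual ≅ 𝟙_ A
  c : 𝟙_ A ≅ dual ⊗ W
  zig : (ρ_ W).inv ≫ W ◁ c.hom ≫ (α_ W dual W).inv ≫ e.hom ▷ W ≫ (λ_ W).hom = 𝟙 W

structure ZigDual' (V : A) where
  dual : A
  E : dual ⊗ V ≅ 𝟙_ A
  C : 𝟙_ A ≅ V ⊗ dual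
  zig : (λ_ V).inv ≫ C.hom ▷ V ≫ (α_ V dual V).hom ≫ V ◁ E.hom ≫ (ρ_ V).hom = 𝟙 V

lemma ZigDual.zig2 {W : A} (D : ZigDual W) :
    (ρ_ W).inv ≫ W ◁ D.c.hom = (λ_ W).inv ≫ D.e.inv ▷ W ≫ (α_ W D.dual W).hom := by
  rw [← cancel_mono ((α_ W D.dual W).inv ≫ D.e.hom ▷ W ≫ (λ_ W).hom)]
  · simpa using D.zig

variable [BraidedCategory A]

noncomputable def zigDualOfIso {W W' : A} (ι : W ⊗ W' ≅ 𝟙_ A) : ZigDual W := by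
  refine
    let c₀ : 𝟙_ A ≅ W' ⊗ W := ι.symm ≪≫ β_ W W'
    let z₀ : W ≅ W := (ρ_ W).symm ≪≫ whiskerLeftIso W c₀ ≪≫ (α_ W W' W).symm ≪≫
      whiskerRightIso ι W ≪≫ λ_ W
    ⟨W', ι, c₀ ≪≫ whiskerLeftIso W' z₀.symm, ?_⟩
  have hz : (ρ_ W).inv ≫ W ◁ c₀.hom ≫ (α_ W W' W).inv ≫ ι.hom ▷ W ≫ (λ_ W).hom = z₀.hom := by
    simp [z₀, c₀]
  calc (ρ_ W).inv ≫ W ◁ (c₀.hom ≫ W' ◁ z₀.inv) ≫ (α_ W W' W).inv ≫ ι.hom ▷ W ≫ (λ_ W).hom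
      = (ρ_ W).inv ≫ W ◁ c₀.hom ≫ (W ◁ (W' ◁ z₀.inv) ≫ (α_ W W' W).inv) ≫ ι.hom ▷ W ≫ (λ_ W).hom := by
        simp
    _ = (ρ_ W).inv ≫ W ◁ c₀.hom ≫ (α_ W W' W).inv ≫ ((W ⊗ W') ◁ z₀.inv ≫ ι.hom ▷ W) ≫ (λ_ W).hom := by
        rw [associator_inv_naturality_right]; simp
    _ = (ρ_ W).inv ≫ W ◁ c₀.hom ≫ (α_ W W' W).inv ≫ ι.hom ▷ W ≫ (𝟙_ A ◁ z₀.inv ≫ (λ_ W).hom) := by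
        rw [whisker_exchange]; simp
    _ = z₀.hom ≫ z₀.inv := by rw [leftUnitor_naturality]; rw [reassoc_of% hz]
    _ = 𝟙 W := z₀.hom_inv_id

noncomputable def zigDual'OfIso {V V' : A} (ι : V ⊗ V' ≅ 𝟙_ A) : ZigDual' V := by
  refine
    let E : V' ⊗ V ≅ 𝟙_ A := β_ V' V ≪≫ ι
    let z₀ : V ≅ V := (λ_ V).symm ≪≫ whiskerRightIso ι.symm V ≪≫ α_ V V' V ≪≫
      whiskerLeftIso V E ≪≫ ρ_ V
    ⟨V', E, ι.symm ≪≫ whiskerRightIso z₀.symm V', ?_⟩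
  have hz : (λ_ V).inv ≫ ι.inv ▷ V ≫ (α_ V V' V).hom ≫ V ◁ E.hom ≫ (ρ_ V).hom = z₀.hom := by
    simp [z₀]
  calc (λ_ V).inv ≫ (ι.inv ≫ z₀.inv ▷ V') ▷ V ≫ (α_ V V' V).hom ≫ V ◁ E.hom ≫ (ρ_ V).hom
      = (λ_ V).inv ≫ ι.inv ▷ V ≫ ((z₀.inv ▷ V') ▷ V ≫ (α_ V V' V).hom) ≫ V ◁ E.hom ≫ (ρ_ V).hom := by
        simp
    _ = (λ_ V).inv ≫ ι.inv ▷ V ≫ (α_ V V' V).hom ≫ (z₀.inv ▷ (V' ⊗ V) ≫ V ◁ E.hom) ≫ (ρ_ V).hom := by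
        rw [associator_naturality_left]; simp
    _ = (λ_ V).inv ≫ ι.inv ▷ V ≫ (α_ V V' V).hom ≫ V ◁ E.hom ≫ (z₀.inv ▷ 𝟙_ A ≫ (ρ_ V).hom) := by
        rw [← whisker_exchange]; simp
    _ = z₀.hom ≫ z₀.inv := by rw [rightUnitor_naturality]; rw [reassoc_of% hz]
    _ = 𝟙 V := z₀.hom_inv_id

private lemma insWhisker {z W M : A} (m : 𝟙_ A ⟶ M) :
    (z ◁ ((ρ_ W).inv ≫ W ◁ m)) ≫ (α_ z W M).inv =
      (ρ_ (z ⊗ W)).inv ≫ ((z ⊗ W) ◁ m) := by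
  monoidal

lemma oreGen {W V : A} (D : ZigDual W) (σ : W ⟶ V) {z Z' : A} (u : z ⊗ W ⟶ Z') :
    (z ◁ σ) ≫ ((z ◁ ((λ_ V).inv ≫ D.e.inv ▷ V ≫ (α_ W D.dual V).hom)) ≫
        (α_ z W (D.dual ⊗ V)).inv ≫ u ▷ (D.dual ⊗ V)) =
      u ≫ ((ρ_ Z').inv ≫ Z' ◁ (D.c.hom ≫ D.dual ◁ σ)) := by
  have h1 : σ ≫ (λ_ V).inv ≫ D.e.inv ▷ V ≫ (α_ W D.dual V).hom =
      (ρ_ W).inv ≫ W ◁ (D.c.hom ≫ D.dual ◁ σ) := by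
    calc σ ≫ (λ_ V).inv ≫ D.e.inv ▷ V ≫ (α_ W D.dual V).hom
        = (λ_ W).inv ≫ 𝟙_ A ◁ σ ≫ D.e.inv ▷ V ≫ (α_ W D.dual V).hom := by
          rw [leftUnitor_inv_naturality_assoc]
      _ = (λ_ W).inv ≫ D.e.inv ▷ W ≫ (W ⊗ D.dual) ◁ σ ≫ (α_ W D.dual V).hom := by
          rw [whisker_exchange_assoc]
      _ = (λ_ W).inv ≫ D.e.inv ▷ W ≫ (α_ W D.dual W).hom ≫ W ◁ (D.dual ◁ σ) := by
          rw [associator_naturality_right]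
      _ = (ρ_ W).inv ≫ W ◁ D.c.hom ≫ W ◁ (D.dual ◁ σ) := by
          rw [← reassoc_of% D.zig2]
      _ = (ρ_ W).inv ≫ W ◁ (D.c.hom ≫ D.dual ◁ σ) := by simp
  calc (z ◁ σ) ≫ ((z ◁ ((λ_ V).inv ≫ D.e.inv ▷ V ≫ (α_ W D.dual V).hom)) ≫
        (α_ z W (D.dual ⊗ V)).inv ≫ u ▷ (D.dual ⊗ V))
      = (z ◁ (σ ≫ (λ_ V).inv ≫ D.e.inv ▷ V ≫ (α_ W D.dual V).hom)) ≫
        (α_ z W (D.dual ⊗ V)).inv ≫ u ▷ (D.dual ⊗ V) := by simp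
    _ = (z ◁ ((ρ_ W).inv ≫ W ◁ (D.c.hom ≫ D.dual ◁ σ))) ≫
        (α_ z W (D.dual ⊗ V)).inv ≫ u ▷ (D.dual ⊗ V) := by rw [h1]
    _ = (ρ_ (z ⊗ W)).inv ≫ ((z ⊗ W) ◁ (D.c.hom ≫ D.dual ◁ σ)) ≫ u ▷ (D.dual ⊗ V) := by
        rw [reassoc_of% (insWhisker (z := z) (W := W) (D.c.hom ≫ D.dual ◁ σ))]
    _ = (ρ_ (z ⊗ W)).inv ≫ u ▷ 𝟙_ A ≫ Z' ◁ (D.c.hom ≫ D.dual ◁ σ) := by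
        rw [whisker_exchange]
    _ = u ≫ ((ρ_ Z').inv ≫ Z' ◁ (D.c.hom ≫ D.dual ◁ σ)) := by
        rw [rightUnitor_inv_naturality_assoc]

variable [Preadditive A] [MonoidalPreadditive A]

lemma extGen {W V : A} (DW : ZigDual W) (DV : ZigDual' V) (σ : W ⟶ V) {z B : A}
    (g : z ⊗ V ⟶ B) (hyp : (z ◁ σ) ≫ g = 0) :
    g ≫ ((ρ_ B).inv ≫ B ◁ DV.E.inv ≫ (α_ B DV.dual V).inv ≫
      (((λ_ (B ⊗ DV.dual)).inv ≫ (DW.c.hom ≫ DW.dual ◁ σ) ▷ (B ⊗ DV.dual)) ▷ V)) = 0 := by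
  set V' := DV.dual
  set W' := DW.dual
  set gh : z ⟶ B ⊗ V' :=
    (ρ_ z).inv ≫ z ◁ DV.C.hom ≫ (α_ z V V').inv ≫ g ▷ V' with hgh
  have claim1 : (gh ▷ V) ≫ (α_ B V' V).hom ≫ B ◁ DV.E.hom ≫ (ρ_ B).hom = g := by
    calc (gh ▷ V) ≫ (α_ B V' V).hom ≫ B ◁ DV.E.hom ≫ (ρ_ B).hom
        = ((ρ_ z).inv ▷ V) ≫ ((z ◁ DV.C.hom) ▷ V) ≫ ((α_ z V V').inv ▷ V) ≫
            ((g ▷ V') ▷ V) ≫ (α_ B V' V).hom ≫ B ◁ DV.E.hom ≫ (ρ_ B).hom := by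
          simp [hgh]
      _ = ((ρ_ z).inv ▷ V) ≫ ((z ◁ DV.C.hom) ▷ V) ≫ ((α_ z V V').inv ▷ V) ≫
            (α_ (z ⊗ V) V' V).hom ≫ (g ▷ (V' ⊗ V)) ≫ B ◁ DV.E.hom ≫ (ρ_ B).hom := by
          rw [associator_naturality_left_assoc]
      _ = ((ρ_ z).inv ▷ V) ≫ ((z ◁ DV.C.hom) ▷ V) ≫ ((α_ z V V').inv ▷ V) ≫
            (α_ (z ⊗ V) V' V).hom ≫ ((z ⊗ V) ◁ DV.E.hom) ≫ (g ▷ 𝟙_ A) ≫ (ρ_ B).hom := by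
          rw [← whisker_exchange_assoc]
      _ = (((ρ_ z).inv ▷ V) ≫ ((z ◁ DV.C.hom) ▷ V) ≫ ((α_ z V V').inv ▷ V) ≫
            (α_ (z ⊗ V) V' V).hom ≫ ((z ⊗ V) ◁ DV.E.hom) ≫ (ρ_ (z ⊗ V)).hom) ≫ g := by
          rw [rightUnitor_naturality]; simp
      _ = (z ◁ ((λ_ V).inv ≫ DV.C.hom ▷ V ≫ (α_ V V' V).hom ≫ V ◁ DV.E.hom ≫ (ρ_ V).hom)) ≫ g := by
          congr 1
          monoidal
      _ = g := by rw [DV.zig]; simp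
  set m : 𝟙_ A ⟶ W' ⊗ V := DW.c.hom ≫ W' ◁ σ with hm
  set P : W ⊗ z ⟶ V ⊗ (B ⊗ V') := (W ◁ gh) ≫ (σ ▷ (B ⊗ V')) with hP
  have hΓ : P ≫ ((β_ V (B ⊗ V')).hom ≫ (α_ B V' V).hom ≫ B ◁ DV.E.hom ≫ (ρ_ B).hom) = 0 := by
    calc P ≫ ((β_ V (B ⊗ V')).hom ≫ (α_ B V' V).hom ≫ B ◁ DV.E.hom ≫ (ρ_ B).hom)
        = (W ◁ gh) ≫ (β_ W (B ⊗ V')).hom ≫ ((B ⊗ V') ◁ σ) ≫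
            (α_ B V' V).hom ≫ B ◁ DV.E.hom ≫ (ρ_ B).hom := by
          rw [hP]; simp only [Category.assoc]
          rw [BraidedCategory.braiding_naturality_left_assoc]
      _ = (β_ W z).hom ≫ (gh ▷ W) ≫ ((B ⊗ V') ◁ σ) ≫
            (α_ B V' V).hom ≫ B ◁ DV.E.hom ≫ (ρ_ B).hom := by
          rw [BraidedCategory.braiding_naturality_right_assoc]
      _ = (β_ W z).hom ≫ (z ◁ σ) ≫ (gh ▷ V) ≫
            (α_ B V' V).hom ≫ B ◁ DV.E.hom ≫ (ρ_ B).hom := by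
          rw [whisker_exchange_assoc]
      _ = (β_ W z).hom ≫ (z ◁ σ) ≫ g := by rw [claim1]
      _ = 0 := by rw [hyp]; simp
  have hPz : P = 0 := by
    have h0 : P ≫ ((β_ V (B ⊗ V')).hom ≫ (α_ B V' V).hom ≫ B ◁ DV.E.hom ≫ (ρ_ B).hom) =
        0 ≫ ((β_ V (B ⊗ V')).hom ≫ (α_ B V' V).hom ≫ B ◁ DV.E.hom ≫ (ρ_ B).hom) := by
      rw [hΓ]; simp
    exact (cancel_mono _).mp h0
  have claim2 : gh ≫ ((λ_ (B ⊗ V')).inv ≫ m ▷ (B ⊗ V')) = 0 := by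
    calc gh ≫ (λ_ (B ⊗ V')).inv ≫ m ▷ (B ⊗ V')
        = (λ_ z).inv ≫ (𝟙_ A ◁ gh) ≫ m ▷ (B ⊗ V') := by
          rw [leftUnitor_inv_naturality_assoc]
      _ = (λ_ z).inv ≫ (m ▷ z) ≫ ((W' ⊗ V) ◁ gh) := by rw [whisker_exchange]
      _ = (λ_ z).inv ≫ (DW.c.hom ▷ z) ≫ ((W' ⊗ W) ◁ gh) ≫ ((W' ◁ σ) ▷ (B ⊗ V')) := by
          rw [hm]; simp only [comp_whiskerRight, Category.assoc]; rw [← whisker_exchange]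
      _ = (λ_ z).inv ≫ (DW.c.hom ▷ z) ≫ (α_ W' W z).hom ≫ (W' ◁ (W ◁ gh)) ≫
            (W' ◁ (σ ▷ (B ⊗ V'))) ≫ (α_ W' V (B ⊗ V')).inv := by
          congr 2
          monoidal
      _ = (λ_ z).inv ≫ (DW.c.hom ▷ z) ≫ (α_ W' W z).hom ≫ (W' ◁ P) ≫
            (α_ W' V (B ⊗ V')).inv := by rw [hP]; simp
      _ = 0 := by rw [hPz]; simp
  calc g ≫ ((ρ_ B).inv ≫ B ◁ DV.E.inv ≫ (α_ B V' V).inv ≫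
        (((λ_ (B ⊗ V')).inv ≫ m ▷ (B ⊗ V')) ▷ V))
      = (g ≫ (ρ_ B).inv ≫ B ◁ DV.E.inv ≫ (α_ B V' V).inv) ≫
        (((λ_ (B ⊗ V')).inv ≫ m ▷ (B ⊗ V')) ▷ V) := by simp
    _ = (gh ▷ V) ≫ (((λ_ (B ⊗ V')).inv ≫ m ▷ (B ⊗ V')) ▷ V) := by
        congr 1
        rw [← claim1]; simp
    _ = ((gh ≫ ((λ_ (B ⊗ V')).inv ≫ m ▷ (B ⊗ V'))) ▷ V) := by simp
    _ = 0 := by rw [claim2]; simp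
end ZigDualSec
/- ===== Ore and extension properties for S and S_A ===== -/
section IndSec
open MorphismProperty

variable {C : Type u} [Category.{v} C] [Preadditive C] [MonoidalCategory C]
    [SymmetricCategory C] [MonoidalPreadditive C]
variable {A : Type u'} [Category.{v'} A] [Preadditive A] [MonoidalCategory A]
    [SymmetricCategory A] [MonoidalPreadditive A]
variable {S : MorphismProperty C} (hS : IsHomMulSystem S)
variable (F : C ⥤ A) [F.Monoidal]

/-- Invertible objects of `A` of the form `F.obj g`. -/
noncomputable def zigDualF [GradedComm2Ring C] (g : C) : ZigDual (F.obj g) := by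
  apply zigDualOfIso (W' := F.obj (Classical.choose (GradedComm2Ring.invertible g)))
  exact Functor.Monoidal.μIso F _ _ ≪≫
    F.mapIso (Classical.choice (Classical.choose_spec (GradedComm2Ring.invertible g))) ≪≫
    (Functor.Monoidal.εIso F).symm

noncomputable def zigDual'F [GradedComm2Ring C] (g : C) : ZigDual' (F.obj g) := by
  apply zigDual'OfIso (V' := F.obj (Classical.choose (GradedComm2Ring.invertible g)))
  exact Functor.Monoidal.μIso F _ _ ≪≫
    F.mapIso (Classical.choice (Classical.choose_spec (GradedComm2Ring.invertible g))) ≪≫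
    (Functor.Monoidal.εIso F).symm

noncomputable def zigDualC [GradedComm2Ring C] (g : C) : ZigDual g :=
  zigDualOfIso (Classical.choice (Classical.choose_spec (GradedComm2Ring.invertible g)))

noncomputable def zigDual'C [GradedComm2Ring C] (g : C) : ZigDual' g :=
  zigDual'OfIso (Classical.choice (Classical.choose_spec (GradedComm2Ring.invertible g)))

variable [GradedComm2Ring C]

include hS in
/-- left Ore condition for `S`. -/
lemma oreS {X' X Y : C} (s : X' ⟶ X) (hs : S s) (f : X' ⟶ Y) :
    ∃ (T : C) (t : Y ⟶ T) (v : X ⟶ T), S t ∧ f ≫ t = s ≫ v := by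
  set D := zigDualC X'
  have h := oreGen D s (u := (λ_ X').hom ≫ f)
  refine ⟨_, (ρ_ Y).inv ≫ Y ◁ (D.c.hom ≫ D.dual ◁ s),
    (λ_ X).inv ≫ ((𝟙_ C) ◁ ((λ_ X).inv ≫ D.e.inv ▷ X ≫ (α_ X' D.dual X).hom)) ≫
      (α_ (𝟙_ C) X' (D.dual ⊗ X)).inv ≫ ((λ_ X').hom ≫ f) ▷ (D.dual ⊗ X), ?_, ?_⟩
  · exact hS.translate_mem s _ hs
      (Translate.compIsoRight (ρ_ Y).symm (Translate.whiskerLeft Y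
        (Translate.compIsoRight D.c (Translate.whiskerLeft D.dual (Translate.refl s)))))
  · have hnat : s ≫ (λ_ X).inv = (λ_ X').inv ≫ (𝟙_ C ◁ s) := by
      rw [leftUnitor_inv_naturality]
    rw [reassoc_of% hnat, h]
    simp
end IndSec

section More
open MorphismProperty
variable {C : Type u} [Category.{v} C] [Preadditive C] [MonoidalCategory C]
    [SymmetricCategory C] [MonoidalPreadditive C]
variable {A : Type u'} [Category.{v'} A] [Preadditive A] [MonoidalCategory A]
    [SymmetricCategory A] [MonoidalPreadditive A]
variable {S : MorphismProperty C} (hS : IsHomMulSystem S)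
variable (F : C ⥤ A) [F.Monoidal]
variable [GradedComm2Ring C]

include hS in
/-- cancellation condition for `S`. -/
lemma extS {X' X Y : C} (s : X' ⟶ X) (hs : S s) (g : X ⟶ Y) (hg : s ≫ g = 0) :
    ∃ (T : C) (t : Y ⟶ T), S t ∧ g ≫ t = 0 := by
  set DW := zigDualC X'
  set DV := zigDual'C X
  have hyp : ((𝟙_ C) ◁ s) ≫ ((λ_ X).hom ≫ g) = 0 := by
    rw [← Category.assoc, leftUnitor_naturality, Category.assoc, hg, comp_zero]
  have h := extGen DW DV s ((λ_ X).hom ≫ g) hyp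
  have hmem := hS.translate_mem s _ hs
    (Translate.compIsoRight ((ρ_ Y).symm ≪≫ whiskerLeftIso Y DV.E.symm ≪≫ (α_ Y DV.dual X).symm)
      (Translate.whiskerRight X (Translate.compIsoRight (λ_ (Y ⊗ DV.dual)).symm
        (Translate.whiskerRight (Y ⊗ DV.dual) (Translate.compIsoRight DW.c
          (Translate.whiskerLeft DW.dual (Translate.refl s)))))))
  refine ⟨_, (ρ_ Y).inv ≫ Y ◁ DV.E.inv ≫ (α_ Y DV.dual X).inv ≫
      (((λ_ (Y ⊗ DV.dual)).inv ≫ (DW.c.hom ≫ DW.dual ◁ s) ▷ (Y ⊗ DV.dual)) ▷ X), ?_, ?_⟩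
  · simpa using hmem
  · have h2 : (λ_ X).hom ≫ g ≫ ((ρ_ Y).inv ≫ Y ◁ DV.E.inv ≫ (α_ Y DV.dual X).inv ≫
        (((λ_ (Y ⊗ DV.dual)).inv ≫ (DW.c.hom ≫ DW.dual ◁ s) ▷ (Y ⊗ DV.dual)) ▷ X)) =
        (λ_ X).hom ≫ 0 := by
      rw [comp_zero, ← h]; simp
    exact (cancel_epi (λ_ X).hom).mp h2

/-- left Ore condition for the extension `S_A`, with a context `z`. -/
lemma oreA {x y : A} (s : x ⟶ y) (hs : ExtMem F S s) : ∀ (z Z' : A) (u : z ⊗ x ⟶ Z'),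
    ∃ (T : A) (t : Z' ⟶ T) (v : z ⊗ y ⟶ T), ExtMem F S t ∧ (z ◁ s) ≫ v = u ≫ t := by
  induction hs with
  | of s₀ hs₀ =>
    intro z Z' u
    exact ⟨_, _, _, ExtMem.comp _ _ (ExtMem.iso _ inferInstance)
      (ExtMem.whiskerLeft Z' _ (ExtMem.comp _ _ (ExtMem.iso (zigDualF F _).c.hom inferInstance)
        (ExtMem.whiskerLeft (zigDualF F _).dual _ (ExtMem.of s₀ hs₀)))),
      oreGen (zigDualF F _) (F.map s₀) u⟩
  | iso f hf =>
    intro z Z' u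
    exact ⟨Z', 𝟙 Z', inv (z ◁ f) ≫ u, ExtMem.iso _ inferInstance, by simp⟩
  | comp f g hf hg ihf ihg =>
    intro z Z' u
    obtain ⟨T₁, t₁, v₁, m₁, e₁⟩ := ihf z Z' u
    obtain ⟨T₂, t₂, v₂, m₂, e₂⟩ := ihg z T₁ v₁
    refine ⟨T₂, t₁ ≫ t₂, v₂, ExtMem.comp _ _ m₁ m₂, ?_⟩
    rw [MonoidalCategory.whiskerLeft_comp, Category.assoc, e₂, reassoc_of% e₁]
  | whiskerLeft w f hf ih =>
    intro z Z' u
    obtain ⟨T, t, v, m, e⟩ := ih (z ⊗ w) Z' ((α_ z w _).hom ≫ u)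
    refine ⟨T, t, (α_ z w _).inv ≫ v, m, ?_⟩
    rw [reassoc_of% (associator_inv_naturality_right z w f), e]
    simp
  | whiskerRight w f hf ih =>
    intro z Z' u
    obtain ⟨T, t, v, m, e⟩ := ih (z ⊗ w) Z' ((α_ z w _).hom ≫ (z ◁ (β_ _ w).inv) ≫ u)
    refine ⟨T, t, (z ◁ (β_ _ w).hom) ≫ (α_ z w _).inv ≫ v, m, ?_⟩
    have st1 : (z ◁ (f ▷ w)) ≫ (z ◁ (β_ _ w).hom) = (z ◁ (β_ _ w).hom) ≫ (z ◁ (w ◁ f)) := by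
      rw [← MonoidalCategory.whiskerLeft_comp, ← MonoidalCategory.whiskerLeft_comp,
        BraidedCategory.braiding_naturality_left]
    rw [← Category.assoc, st1, Category.assoc,
      reassoc_of% (associator_inv_naturality_right z w f), e]
    simp
end More

section More2
open MorphismProperty
variable {C : Type u} [Category.{v} C] [Preadditive C] [MonoidalCategory C]
    [SymmetricCategory C] [MonoidalPreadditive C]
variable {A : Type u'} [Category.{v'} A] [Preadditive A] [MonoidalCategory A]
    [SymmetricCategory A] [MonoidalPreadditive A]
variable {S : MorphismProperty C}
variable (F : C ⥤ A) [F.Monoidal]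
variable [GradedComm2Ring C]

/-- cancellation condition for the extension `S_A`, with a context `z`. -/
lemma extA {x y : A} (s : x ⟶ y) (hs : ExtMem F S s) : ∀ (z B : A) (g : z ⊗ y ⟶ B),
    (z ◁ s) ≫ g = 0 → ∃ (T : A) (t : B ⟶ T), ExtMem F S t ∧ g ≫ t = 0 := by
  induction hs with
  | of s₀ hs₀ =>
    intro z B g hyp
    refine ⟨_, _, ?_, extGen (zigDualF F _) (zigDual'F F _) (F.map s₀) g hyp⟩
    exact ExtMem.comp _ _ (ExtMem.iso _ inferInstance)
      (ExtMem.comp _ _ (ExtMem.iso _ inferInstance)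
        (ExtMem.comp _ _ (ExtMem.iso _ inferInstance)
          (ExtMem.whiskerRight _ _ (ExtMem.comp _ _ (ExtMem.iso _ inferInstance)
            (ExtMem.whiskerRight _ _ (ExtMem.comp _ _
              (ExtMem.iso (zigDualF F _).c.hom inferInstance)
              (ExtMem.whiskerLeft (zigDualF F _).dual _ (ExtMem.of s₀ hs₀))))))))
  | iso f hf =>
    intro z B g hyp
    have h0 : (z ◁ f) ≫ g = (z ◁ f) ≫ 0 := by simpa using hyp
    exact ⟨B, 𝟙 B, ExtMem.iso _ inferInstance, by simpa using (cancel_epi (z ◁ f)).mp h0⟩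
  | comp f g' hf hg' ihf ihg' =>
    intro z B g hyp
    obtain ⟨T₁, t₁, m₁, h₁⟩ := ihf z B ((z ◁ g') ≫ g) (by
      rw [← Category.assoc, ← MonoidalCategory.whiskerLeft_comp]; exact hyp)
    obtain ⟨T₂, t₂, m₂, h₂⟩ := ihg' z T₁ (g ≫ t₁) (by rw [← Category.assoc]; exact h₁)
    exact ⟨T₂, t₁ ≫ t₂, ExtMem.comp _ _ m₁ m₂, by rw [← Category.assoc]; exact h₂⟩
  | whiskerLeft w f hf ih =>
    intro z B g hyp
    obtain ⟨T, t, m, h⟩ := ih (z ⊗ w) B ((α_ z w _).hom ≫ g) (by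
      rw [reassoc_of% (associator_naturality_right z w f), hyp, comp_zero])
    refine ⟨T, t, m, ?_⟩
    have h2 : (α_ z w _).hom ≫ g ≫ t = (α_ z w _).hom ≫ 0 := by
      rw [comp_zero, ← Category.assoc]; exact h
    exact (cancel_epi _).mp h2
  | whiskerRight w f hf ih =>
    intro z B g hyp
    have hyp2 : (z ◁ (w ◁ f)) ≫ (z ◁ (β_ _ w).inv) ≫ g = 0 := by
      have e0 : (β_ _ w).hom ≫ (w ◁ f) ≫ (β_ _ w).inv = f ▷ w := by
        rw [← BraidedCategory.braiding_naturality_left_assoc]; simp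
      have e1 : (z ◁ (β_ _ w).hom) ≫ (z ◁ (w ◁ f)) ≫ (z ◁ (β_ _ w).inv) = z ◁ (f ▷ w) := by
        rw [← MonoidalCategory.whiskerLeft_comp, ← MonoidalCategory.whiskerLeft_comp, e0]
      have h3 : (z ◁ (β_ _ w).hom) ≫ (z ◁ (w ◁ f)) ≫ (z ◁ (β_ _ w).inv) ≫ g =
          (z ◁ (β_ _ w).hom) ≫ 0 := by
        rw [comp_zero, reassoc_of% e1, hyp]
      exact (cancel_epi _).mp h3
    obtain ⟨T, t, m, h⟩ := ih (z ⊗ w) B ((α_ z w _).hom ≫ (z ◁ (β_ _ w).inv) ≫ g) (by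
      rw [reassoc_of% (associator_naturality_right z w f), hyp2, comp_zero])
    refine ⟨T, t, m, ?_⟩
    have h2 : ((α_ z w _).hom ≫ (z ◁ (β_ _ w).inv)) ≫ g ≫ t =
        ((α_ z w _).hom ≫ (z ◁ (β_ _ w).inv)) ≫ 0 := by
      rw [comp_zero]
      rw [show ((α_ z w _).hom ≫ (z ◁ (β_ _ w).inv)) ≫ g ≫ t =
        ((α_ z w _).hom ≫ (z ◁ (β_ _ w).inv) ≫ g) ≫ t by simp]
      rw [h]
    exact (cancel_epi _).mp h2
end More2

section CalcSec
open MorphismProperty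
variable {C : Type u} [Category.{v} C] [Preadditive C] [MonoidalCategory C]
    [SymmetricCategory C] [MonoidalPreadditive C]
variable {A : Type u'} [Category.{v'} A] [Preadditive A] [MonoidalCategory A]
    [SymmetricCategory A] [MonoidalPreadditive A]
variable {S : MorphismProperty C}
variable [GradedComm2Ring C]

lemma hasLeftCalc_S (hS : IsHomMulSystem S) : S.HasLeftCalculusOfFractions where
  id_mem X := hS.iso_mem _ inferInstance
  comp_mem f g hf hg := hS.comp_mem f g hf hg
  exists_leftFraction X Y φ := by
    obtain ⟨T, t, v, ht, he⟩ := oreS hS φ.s φ.hs φ.f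
    exact ⟨LeftFraction.mk v t ht, he⟩
  ext X' X Y f₁ f₂ s hs h := by
    obtain ⟨T, t, ht, h0⟩ := extS hS s hs (f₁ - f₂) (by rw [Preadditive.comp_sub, h, sub_self])
    refine ⟨T, t, ht, ?_⟩
    rw [Preadditive.sub_comp] at h0
    exact sub_eq_zero.mp h0

variable (F : C ⥤ A) [F.Monoidal]

lemma hasLeftCalc_A : (extSystem F S).HasLeftCalculusOfFractions where
  id_mem X := ExtMem.iso _ inferInstance
  comp_mem f g hf hg := ExtMem.comp f g hf hg
  exists_leftFraction X Y φ := by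
    obtain ⟨T, t, v, ht, he⟩ := oreA F φ.s φ.hs (𝟙_ A) _ ((λ_ _).hom ≫ φ.f)
    refine ⟨LeftFraction.mk ((λ_ _).inv ≫ v) t ht, ?_⟩
    have hnat : φ.s ≫ (λ_ _).inv = (λ_ _).inv ≫ (𝟙_ A ◁ φ.s) := leftUnitor_inv_naturality _
    rw [reassoc_of% hnat, he]
    simp
  ext X' X Y f₁ f₂ s hs h := by
    obtain ⟨T, t, ht, h0⟩ := extA F s hs (𝟙_ A) _ ((λ_ X).hom ≫ (f₁ - f₂)) (by
      rw [← Category.assoc, leftUnitor_naturality, Category.assoc, Preadditive.comp_sub, h,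
        sub_self, comp_zero])
    refine ⟨T, t, ht, ?_⟩
    rw [Category.assoc] at h0
    have h1 : (f₁ - f₂) ≫ t = 0 := by
      have h2 : (λ_ X).hom ≫ (f₁ - f₂) ≫ t = (λ_ X).hom ≫ 0 := by rw [comp_zero]; exact h0
      exact (cancel_epi _).mp h2
    rw [Preadditive.sub_comp] at h1
    exact sub_eq_zero.mp h1
end CalcSec

section KeySec
open MorphismProperty

variable {A : Type u'} [Category.{v'} A] [MonoidalCategory A]

/-- abstract core computation for the key lemma -/
lemma keyCore {W : A} (D : ZigDual W) {X z V₀ : A} (s : W ⟶ V₀) (e : X ≅ z ⊗ W) :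
    e.hom ≫ (z ◁ s) =
      ((ρ_ X).inv ≫ X ◁ (D.c.hom ≫ D.dual ◁ s)) ≫
      ((e.hom ▷ (D.dual ⊗ V₀)) ≫ (α_ z W (D.dual ⊗ V₀)).hom ≫
        (z ◁ ((α_ W D.dual V₀).inv ≫ (D.e.hom ▷ V₀) ≫ (λ_ V₀).hom))) := by
  have hinner : (ρ_ W).inv ≫ (W ◁ (D.c.hom ≫ D.dual ◁ s)) ≫ (α_ W D.dual V₀).inv ≫
      (D.e.hom ▷ V₀) ≫ (λ_ V₀).hom = s := by
    calc (ρ_ W).inv ≫ (W ◁ (D.c.hom ≫ D.dual ◁ s)) ≫ (α_ W D.dual V₀).inv ≫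
        (D.e.hom ▷ V₀) ≫ (λ_ V₀).hom
        = (ρ_ W).inv ≫ (W ◁ D.c.hom) ≫ (W ◁ (D.dual ◁ s)) ≫ (α_ W D.dual V₀).inv ≫
          (D.e.hom ▷ V₀) ≫ (λ_ V₀).hom := by simp
      _ = (ρ_ W).inv ≫ (W ◁ D.c.hom) ≫ (α_ W D.dual W).inv ≫ ((W ⊗ D.dual) ◁ s) ≫
          (D.e.hom ▷ V₀) ≫ (λ_ V₀).hom := by rw [associator_inv_naturality_right_assoc]
      _ = (ρ_ W).inv ≫ (W ◁ D.c.hom) ≫ (α_ W D.dual W).inv ≫ (D.e.hom ▷ W) ≫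
          (𝟙_ A ◁ s) ≫ (λ_ V₀).hom := by rw [whisker_exchange_assoc]
      _ = ((ρ_ W).inv ≫ (W ◁ D.c.hom) ≫ (α_ W D.dual W).inv ≫ (D.e.hom ▷ W) ≫
          (λ_ W).hom) ≫ s := by rw [leftUnitor_naturality]; simp
      _ = s := by rw [D.zig]; simp
  calc e.hom ≫ (z ◁ s)
      = e.hom ≫ (z ◁ ((ρ_ W).inv ≫ (W ◁ (D.c.hom ≫ D.dual ◁ s)) ≫ (α_ W D.dual V₀).inv ≫
          (D.e.hom ▷ V₀) ≫ (λ_ V₀).hom)) := by rw [hinner]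
    _ = e.hom ≫ (z ◁ ((ρ_ W).inv ≫ (W ◁ (D.c.hom ≫ D.dual ◁ s)))) ≫
          (z ◁ ((α_ W D.dual V₀).inv ≫ (D.e.hom ▷ V₀) ≫ (λ_ V₀).hom)) := by simp
    _ = e.hom ≫ ((ρ_ (z ⊗ W)).inv ≫ ((z ⊗ W) ◁ (D.c.hom ≫ D.dual ◁ s)) ≫
          (α_ z W (D.dual ⊗ V₀)).hom) ≫
          (z ◁ ((α_ W D.dual V₀).inv ≫ (D.e.hom ▷ V₀) ≫ (λ_ V₀).hom)) := by
        congr 2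
        monoidal
    _ = e.hom ≫ (ρ_ (z ⊗ W)).inv ≫ ((z ⊗ W) ◁ (D.c.hom ≫ D.dual ◁ s)) ≫
          (α_ z W (D.dual ⊗ V₀)).hom ≫
          (z ◁ ((α_ W D.dual V₀).inv ≫ (D.e.hom ▷ V₀) ≫ (λ_ V₀).hom)) := by simp
    _ = (ρ_ X).inv ≫ (e.hom ▷ 𝟙_ A) ≫ ((z ⊗ W) ◁ (D.c.hom ≫ D.dual ◁ s)) ≫
          (α_ z W (D.dual ⊗ V₀)).hom ≫
          (z ◁ ((α_ W D.dual V₀).inv ≫ (D.e.hom ▷ V₀) ≫ (λ_ V₀).hom)) := by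
        rw [rightUnitor_inv_naturality_assoc]
    _ = (ρ_ X).inv ≫ (X ◁ (D.c.hom ≫ D.dual ◁ s)) ≫ (e.hom ▷ (D.dual ⊗ V₀)) ≫
          (α_ z W (D.dual ⊗ V₀)).hom ≫
          (z ◁ ((α_ W D.dual V₀).inv ≫ (D.e.hom ▷ V₀) ≫ (λ_ V₀).hom)) := by
        rw [← whisker_exchange_assoc]
    _ = ((ρ_ X).inv ≫ X ◁ (D.c.hom ≫ D.dual ◁ s)) ≫
        ((e.hom ▷ (D.dual ⊗ V₀)) ≫ (α_ z W (D.dual ⊗ V₀)).hom ≫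
          (z ◁ ((α_ W D.dual V₀).inv ≫ (D.e.hom ▷ V₀) ≫ (λ_ V₀).hom))) := by simp

variable {C : Type u} [Category.{v} C] [MonoidalCategory C]

open Functor.LaxMonoidal Functor.OplaxMonoidal in
/-- Transport of zig-duality data along a monoidal functor. -/
noncomputable def ZigDual.fmap (F : C ⥤ A) [F.Monoidal] {W : C} (D : ZigDual W) :
    ZigDual (F.obj W) where
  dual := F.obj D.dual
  e := Functor.Monoidal.μIso F W D.dual ≪≫ F.mapIso D.e ≪≫ (Functor.Monoidal.εIso F).symm
  c := Functor.Monoidal.εIso F ≪≫ F.mapIso D.c ≪≫ (Functor.Monoidal.μIso F D.dual W).symm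
  zig := by
    have h2 : F.map ((ρ_ W).inv ≫ W ◁ D.c.hom ≫ (α_ W D.dual W).inv ≫ D.e.hom ▷ W ≫
        (λ_ W).hom) = 𝟙 (F.obj W) := by rw [D.zig, F.map_id]
    simp only [F.map_comp, Functor.Monoidal.map_rightUnitor_inv,
      Functor.Monoidal.map_whiskerLeft, Functor.Monoidal.map_associator_inv,
      Functor.Monoidal.map_whiskerRight, Functor.Monoidal.map_leftUnitor,
      Category.assoc] at h2
    simp only [Iso.trans_hom, Functor.mapIso_hom, Iso.symm_hom, Functor.Monoidal.εIso_hom,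
      Functor.Monoidal.εIso_inv, Functor.Monoidal.μIso_hom, Functor.Monoidal.μIso_inv,
      MonoidalCategory.whiskerLeft_comp, comp_whiskerRight, Category.assoc]
    simpa using h2
end KeySec

section KeyLemmaSec
open MorphismProperty Functor.LaxMonoidal Functor.OplaxMonoidal

variable {C : Type u} [Category.{v} C] [Preadditive C] [MonoidalCategory C]
    [SymmetricCategory C] [MonoidalPreadditive C]
variable {A : Type u'} [Category.{v'} A] [Preadditive A] [MonoidalCategory A]
    [SymmetricCategory A] [MonoidalPreadditive A]
variable {S : MorphismProperty C} (F : C ⥤ A) [F.Monoidal] [GradedComm2Ring C]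

include F in
lemma keyLemma (hS : IsHomMulSystem S) {x y : A} (t : x ⟶ y) (ht : ExtMem F S t) :
    ∀ (z : A) (g : C) (e : F.obj g ≅ z ⊗ x),
      ∃ (h : C) (σ : g ⟶ h) (e' : F.obj h ≅ z ⊗ y),
        S σ ∧ e.hom ≫ (z ◁ t) = F.map σ ≫ e'.hom := by
  induction ht with
  | of s₀ hs₀ =>
    intro z g e
    set D := zigDualC (C := C) _ with hD
    set DF := D.fmap F with hDF
    refine ⟨g ⊗ (D.dual ⊗ _), (ρ_ g).inv ≫ g ◁ (D.c.hom ≫ D.dual ◁ s₀),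
      (Functor.Monoidal.μIso F g (D.dual ⊗ _)).symm ≪≫
        whiskerLeftIso (F.obj g) (Functor.Monoidal.μIso F D.dual _).symm ≪≫
        whiskerRightIso e (F.obj D.dual ⊗ F.obj _) ≪≫
        α_ z (F.obj _) (F.obj D.dual ⊗ F.obj _) ≪≫
        whiskerLeftIso z ((α_ (F.obj _) (F.obj D.dual) (F.obj _)).symm ≪≫
          whiskerRightIso DF.e (F.obj _) ≪≫ λ_ (F.obj _)), ?_, ?_⟩
    · exact hS.translate_mem s₀ _ hs₀
        (Translate.compIsoRight (ρ_ g).symm (Translate.whiskerLeft g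
          (Translate.compIsoRight D.c (Translate.whiskerLeft D.dual (Translate.refl s₀)))))
    · have hbr : F.map ((ρ_ g).inv ≫ g ◁ (D.c.hom ≫ D.dual ◁ s₀)) ≫
          δ F g (D.dual ⊗ _) ≫ (F.obj g ◁ δ F D.dual _) =
          (ρ_ (F.obj g)).inv ≫ (F.obj g ◁ (DF.c.hom ≫ F.obj D.dual ◁ F.map s₀)) := by
        simp only [hDF, ZigDual.fmap, Iso.trans_hom, Functor.mapIso_hom, Iso.symm_hom,
          Functor.Monoidal.εIso_hom, Functor.Monoidal.μIso_inv,
          F.map_comp, Functor.Monoidal.map_whiskerLeft,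
          Functor.Monoidal.map_rightUnitor_inv,
          MonoidalCategory.whiskerLeft_comp, Category.assoc,
          Functor.Monoidal.μ_δ_assoc, Functor.Monoidal.whiskerLeft_μ_δ_assoc,
          Functor.Monoidal.μ_δ, Functor.Monoidal.whiskerLeft_μ_δ]
        rw [show DF.c.hom = ε F ≫ F.map D.c.hom ≫ δ F D.dual _ from rfl]
        simp only [Functor.OplaxMonoidal.δ_natural_right_assoc, ← MonoidalCategory.whiskerLeft_comp_assoc, ← MonoidalCategory.whiskerLeft_comp, Category.assoc, Functor.Monoidal.η_ε_assoc]
        rw [Category.comp_id]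
        exact congrArg _ (congrArg _ (by simp only [Category.assoc] :
          (ε F ≫ F.map D.c.hom ≫ δ F D.dual _) ≫ F.obj D.dual ◁ F.map s₀ =
            ε F ≫ F.map D.c.hom ≫ δ F D.dual _ ≫ F.obj D.dual ◁ F.map s₀).symm)
      have hkc := keyCore DF (F.map s₀) e
      calc e.hom ≫ (z ◁ F.map s₀)
          = ((ρ_ (F.obj g)).inv ≫ F.obj g ◁ (DF.c.hom ≫ F.obj D.dual ◁ F.map s₀)) ≫
            ((e.hom ▷ (F.obj D.dual ⊗ F.obj _)) ≫ (α_ z (F.obj _) (F.obj D.dual ⊗ F.obj _)).hom ≫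
              (z ◁ ((α_ (F.obj _) (F.obj D.dual) (F.obj _)).inv ≫ (DF.e.hom ▷ F.obj _) ≫
                (λ_ (F.obj _)).hom))) := hkc
        _ = (F.map ((ρ_ g).inv ≫ g ◁ (D.c.hom ≫ D.dual ◁ s₀)) ≫
              δ F g (D.dual ⊗ _) ≫ (F.obj g ◁ δ F D.dual _)) ≫
            ((e.hom ▷ (F.obj D.dual ⊗ F.obj _)) ≫ (α_ z (F.obj _) (F.obj D.dual ⊗ F.obj _)).hom ≫
              (z ◁ ((α_ (F.obj _) (F.obj D.dual) (F.obj _)).inv ≫ (DF.e.hom ▷ F.obj _) ≫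
                (λ_ (F.obj _)).hom))) := by rw [hbr]
        _ = _ := by
            simp only [Iso.trans_hom, Functor.mapIso_hom, Iso.symm_hom, whiskerLeftIso_hom,
              whiskerRightIso_hom, Functor.Monoidal.μIso_inv, Category.assoc,
              MonoidalCategory.whiskerLeft_comp]
            rfl
  | iso f hf =>
    intro z g e
    letI := hf
    exact ⟨g, 𝟙 g, e ≪≫ whiskerLeftIso z (asIso f), hS.iso_mem _ inferInstance, by simp⟩
  | comp f g' hf hg' ihf ihg' =>
    intro z g e
    obtain ⟨h₁, σ₁, e₁, hσ₁, heq₁⟩ := ihf z g e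
    obtain ⟨h₂, σ₂, e₂, hσ₂, heq₂⟩ := ihg' z h₁ e₁
    refine ⟨h₂, σ₁ ≫ σ₂, e₂, hS.comp_mem _ _ hσ₁ hσ₂, ?_⟩
    rw [MonoidalCategory.whiskerLeft_comp, ← Category.assoc, heq₁, Category.assoc, heq₂,
      F.map_comp, Category.assoc]
  | whiskerLeft w f hf ih =>
    intro z g e
    obtain ⟨h, σ, e', hσ, heq⟩ := ih (z ⊗ w) g (e ≪≫ (α_ z w _).symm)
    refine ⟨h, σ, e' ≪≫ α_ z w _, hσ, ?_⟩
    have h1 : e.hom ≫ (z ◁ (w ◁ f)) =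
        (e.hom ≫ (α_ z w _).inv ≫ ((z ⊗ w) ◁ f)) ≫ (α_ z w _).hom := by
      rw [Category.assoc, Category.assoc, associator_naturality_right]; simp
    rw [h1]
    have h2 : e.hom ≫ (α_ z w _).inv ≫ ((z ⊗ w) ◁ f) = F.map σ ≫ e'.hom := by
      simpa using heq
    rw [h2]
    simp
  | whiskerRight w f hf ih =>
    intro z g e
    obtain ⟨h, σ, e', hσ, heq⟩ :=
      ih (z ⊗ w) g (e ≪≫ whiskerLeftIso z (β_ _ w) ≪≫ (α_ z w _).symm)
    refine ⟨h, σ, e' ≪≫ α_ z w _ ≪≫ whiskerLeftIso z (β_ _ w).symm, hσ, ?_⟩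
    have h0 : (f ▷ w) = (β_ _ w).hom ≫ (w ◁ f) ≫ (β_ _ w).inv := by
      rw [← BraidedCategory.braiding_naturality_left_assoc]; simp
    have hmid : (α_ z w _).inv ≫ ((z ⊗ w) ◁ f) ≫ (α_ z w _).hom = z ◁ (w ◁ f) := by
      rw [associator_naturality_right]; simp
    have h1 : e.hom ≫ (z ◁ (f ▷ w)) =
        ((e.hom ≫ (z ◁ (β_ _ w).hom) ≫ (α_ z w _).inv) ≫ ((z ⊗ w) ◁ f)) ≫
          (α_ z w _).hom ≫ (z ◁ (β_ _ w).inv) := by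
      rw [h0]
      simp only [MonoidalCategory.whiskerLeft_comp, Category.assoc, ← hmid]
    rw [h1]
    have h2 : e.hom ≫ (z ◁ (β_ _ w).hom) ≫ (α_ z w _).inv ≫ ((z ⊗ w) ◁ f) =
        F.map σ ≫ e'.hom := by simpa using heq
    simp only [Category.assoc]
    rw [reassoc_of% h2]
    simp
end KeyLemmaSec


section FinalSec
open MorphismProperty

variable {C : Type u} [Category.{v} C] [Preadditive C] [MonoidalCategory C]
    [SymmetricCategory C] [MonoidalPreadditive C] [GradedComm2Ring C]
    {A : Type u'} [Category.{v'} A] [Preadditive A] [MonoidalCategory A]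
    [SymmetricCategory A] [MonoidalPreadditive A]
    (S : MorphismProperty C) (hS : IsHomMulSystem S)
    (F : C ⥤ A) [F.Monoidal]
    {D : Type u''} [Category.{v''} D] {B : Type u₃} [Category.{v₃} B]
    (locR : C ⥤ D) [locR.IsLocalization S]
    (locA : A ⥤ B) [locA.IsLocalization (extSystem F S)]
    (Fbar : D ⥤ B) (hFbar : locR ⋙ Fbar = F ⋙ locA)

include hFbar in
lemma obEq (x : C) : Fbar.obj (locR.obj x) = locA.obj (F.obj x) :=
  Functor.congr_obj hFbar x

include hFbar in
lemma mapEq {x y : C} (w : x ⟶ y) :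
    Fbar.map (locR.map w) =
      eqToHom (obEq F locR locA Fbar hFbar x) ≫ locA.map (F.map w) ≫
        eqToHom (obEq F locR locA Fbar hFbar y).symm := by
  have := Functor.congr_hom hFbar w
  simpa using this

include hFbar in
lemma fbar_fraction {x y : C} (φ : S.LeftFraction x y) :
    Fbar.map (φ.map locR (Localization.inverts locR S)) =
      eqToHom (obEq F locR locA Fbar hFbar x) ≫
        (LeftFraction.mk (F.map φ.f) (F.map φ.s) (ExtMem.of _ φ.hs)).map locA
          (Localization.inverts locA (extSystem F S)) ≫
        eqToHom (obEq F locR locA Fbar hFbar y).symm := by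
  have hiso : IsIso (locA.map (F.map φ.s)) :=
    Localization.inverts locA (extSystem F S) _ (ExtMem.of _ φ.hs)
  rw [← cancel_mono (eqToHom (obEq F locR locA Fbar hFbar y)),
    ← cancel_mono (locA.map (F.map φ.s))]
  have h1 : Fbar.map (φ.map locR (Localization.inverts locR S)) ≫
      eqToHom (obEq F locR locA Fbar hFbar y) ≫ locA.map (F.map φ.s) =
      Fbar.map (φ.map locR (Localization.inverts locR S)) ≫ Fbar.map (locR.map φ.s) ≫
        eqToHom (obEq F locR locA Fbar hFbar φ.Y') := by
    rw [mapEq F locR locA Fbar hFbar φ.s]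
    simp
  rw [Category.assoc, h1, ← Functor.map_comp_assoc,
    MorphismProperty.LeftFraction.map_comp_map_s, mapEq F locR locA Fbar hFbar φ.f]
  simp only [Category.assoc, eqToHom_trans, eqToHom_refl, Category.comp_id]
  congr 1
  exact (MorphismProperty.LeftFraction.map_comp_map_s
    (LeftFraction.mk (F.map φ.f) (F.map φ.s) (ExtMem.of _ φ.hs)) locA
    (Localization.inverts locA (extSystem F S))).symm

include hS hFbar in
lemma full_core (hF : F.Full) (x y : C)
    (φ : locA.obj (F.obj x) ⟶ locA.obj (F.obj y)) :
    ∃ ψ : locR.obj x ⟶ locR.obj y,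
      Fbar.map ψ = eqToHom (obEq F locR locA Fbar hFbar x) ≫ φ ≫
        eqToHom (obEq F locR locA Fbar hFbar y).symm := by
  haveI := hasLeftCalc_A (S := S) F
  haveI := hasLeftCalc_S hS
  obtain ⟨φ₀, hφ₀⟩ := Localization.exists_leftFraction locA (extSystem F S) φ
  obtain ⟨k, σ, e', hσ, heq⟩ := keyLemma F hS φ₀.s φ₀.hs (𝟙_ A) y (λ_ (F.obj y)).symm
  set eb : F.obj k ≅ φ₀.Y' := e' ≪≫ λ_ _ with heb
  have hs : φ₀.s = F.map σ ≫ eb.hom := by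
    have h2 : (𝟙_ A ◁ φ₀.s) ≫ (λ_ _).hom = (λ_ _).hom ≫ φ₀.s := leftUnitor_naturality φ₀.s
    rw [heb]
    simp only [Iso.trans_hom]
    rw [← Category.assoc, ← heq]
    simp [reassoc_of% h2]
  obtain ⟨w, hw⟩ := hF.map_surjective (φ₀.f ≫ eb.inv)
  refine ⟨(LeftFraction.mk w σ hσ).map locR (Localization.inverts locR S), ?_⟩
  rw [fbar_fraction S F locR locA Fbar hFbar]
  congr 1
  rw [hφ₀]
  congr 1
  have hiso : IsIso (locA.map (F.map σ)) :=
    Localization.inverts locA (extSystem F S) _ (ExtMem.of _ hσ)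
  rw [← cancel_mono (locA.map (F.map σ))]
  refine (MorphismProperty.LeftFraction.map_comp_map_s (W := extSystem F S) _ locA _).trans ?_
  have hFσ : F.map σ = φ₀.s ≫ eb.inv := by rw [hs]; simp
  calc locA.map (F.map w)
      = locA.map φ₀.f ≫ locA.map eb.inv := by rw [← locA.map_comp, hw]
    _ = (φ₀.map locA (Localization.inverts locA (extSystem F S)) ≫ locA.map φ₀.s) ≫
        locA.map eb.inv := by rw [MorphismProperty.LeftFraction.map_comp_map_s]
    _ = φ₀.map locA (Localization.inverts locA (extSystem F S)) ≫ locA.map (F.map σ) := by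
        rw [hFσ]; simp
end FinalSec

section Final2Sec
open MorphismProperty

variable {C : Type u} [Category.{v} C] [Preadditive C] [MonoidalCategory C]
    [SymmetricCategory C] [MonoidalPreadditive C] [GradedComm2Ring C]
    {A : Type u'} [Category.{v'} A] [Preadditive A] [MonoidalCategory A]
    [SymmetricCategory A] [MonoidalPreadditive A]
    (S : MorphismProperty C) (hS : IsHomMulSystem S)
    (F : C ⥤ A) [F.Monoidal]
    {D : Type u''} [Category.{v''} D] {B : Type u₃} [Category.{v₃} B]
    (locR : C ⥤ D) [locR.IsLocalization S]
    (locA : A ⥤ B) [locA.IsLocalization (extSystem F S)]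
    (Fbar : D ⥤ B) (hFbar : locR ⋙ Fbar = F ⋙ locA)

include hS hFbar in
lemma faithful_core (hF : F.Full) (hFf : F.Faithful) (x y : C)
    (ψ₁ ψ₂ : locR.obj x ⟶ locR.obj y) (h : Fbar.map ψ₁ = Fbar.map ψ₂) : ψ₁ = ψ₂ := by
  haveI := hasLeftCalc_A (S := S) F
  haveI := hasLeftCalc_S hS
  obtain ⟨φ₁, hφ₁⟩ := Localization.exists_leftFraction locR S ψ₁
  obtain ⟨φ₂, hφ₂⟩ := Localization.exists_leftFraction locR S ψ₂
  obtain ⟨ζ, hζ⟩ := MorphismProperty.HasLeftCalculusOfFractions.exists_leftFraction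
    (MorphismProperty.RightFraction.mk φ₁.s φ₁.hs φ₂.s)
  have hζ' : φ₂.s ≫ ζ.s = φ₁.s ≫ ζ.f := hζ
  have hsS : S (φ₁.s ≫ ζ.f) := by rw [← hζ']; exact hS.comp_mem _ _ φ₂.hs ζ.hs
  obtain ⟨s₀, hsdef⟩ : ∃ s₀, s₀ = φ₁.s ≫ ζ.f := ⟨_, rfl⟩
  have hsS₀ : S s₀ := by rw [hsdef]; exact hsS
  set χ₁ := MorphismProperty.LeftFraction.mk (φ₁.f ≫ ζ.f) s₀ hsS₀ with hχ₁
  set χ₂ := MorphismProperty.LeftFraction.mk (φ₂.f ≫ ζ.s) s₀ hsS₀ with hχ₂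
  have rel₁ : MorphismProperty.LeftFractionRel φ₁ χ₁ :=
    ⟨_, ζ.f, 𝟙 _, by show φ₁.s ≫ ζ.f = s₀ ≫ 𝟙 _; simp [hsdef],
      by show φ₁.f ≫ ζ.f = (φ₁.f ≫ ζ.f) ≫ 𝟙 _; simp, by
      simpa [hsdef] using hsS⟩
  have rel₂ : MorphismProperty.LeftFractionRel φ₂ χ₂ :=
    ⟨_, ζ.s, 𝟙 _, by show φ₂.s ≫ ζ.s = s₀ ≫ 𝟙 _; simpa [hsdef] using hζ',
      by show φ₂.f ≫ ζ.s = (φ₂.f ≫ ζ.s) ≫ 𝟙 _; simp, by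
      simpa using (by rw [hζ']; exact hsS : S (φ₂.s ≫ ζ.s))⟩
  have hψ₁ : ψ₁ = χ₁.map locR (Localization.inverts locR S) := by
    rw [hφ₁]; exact (MorphismProperty.LeftFraction.map_eq_iff locR S φ₁ χ₁).2 rel₁
  have hψ₂ : ψ₂ = χ₂.map locR (Localization.inverts locR S) := by
    rw [hφ₂]; exact (MorphismProperty.LeftFraction.map_eq_iff locR S φ₂ χ₂).2 rel₂
  rw [hψ₁, hψ₂] at h
  rw [fbar_fraction S F locR locA Fbar hFbar χ₁, fbar_fraction S F locR locA Fbar hFbar χ₂] at h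
  have h2 : (LeftFraction.mk (F.map χ₁.f) (F.map χ₁.s) (ExtMem.of _ χ₁.hs)).map locA
      (Localization.inverts locA (extSystem F S)) =
      (LeftFraction.mk (F.map χ₂.f) (F.map χ₂.s) (ExtMem.of _ χ₂.hs)).map locA
      (Localization.inverts locA (extSystem F S)) := by
    have h3 := (cancel_epi (eqToHom (obEq F locR locA Fbar hFbar x))).mp h
    exact (cancel_mono (eqToHom (obEq F locR locA Fbar hFbar y).symm)).mp h3
  obtain ⟨Z, t₁, t₂, hst, hft, hmem⟩ :=
    (MorphismProperty.LeftFraction.map_eq_iff locA (extSystem F S) _ _).1 h2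
  -- normalize the S_A-morphism F.map s₀ ≫ t₁
  have hmem' : ExtMem F S (F.map s₀ ≫ t₁) := hmem
  obtain ⟨l, σ₂, e', hσ₂, heq⟩ := keyLemma F hS _ hmem' (𝟙_ A) y (λ_ (F.obj y)).symm
  set eb : F.obj l ≅ Z := e' ≪≫ λ_ _ with heb
  have hcomp : F.map s₀ ≫ t₁ = F.map σ₂ ≫ eb.hom := by
    have hnu : (𝟙_ A ◁ (F.map s₀ ≫ t₁)) ≫ (λ_ _).hom = (λ_ _).hom ≫ (F.map s₀ ≫ t₁) :=
      leftUnitor_naturality _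
    rw [heb]
    simp only [Iso.trans_hom]
    rw [← Category.assoc, ← heq]
    simp [reassoc_of% hnu]
  obtain ⟨w₁, hw₁⟩ := hF.map_surjective (t₁ ≫ eb.inv)
  obtain ⟨w₂, hw₂⟩ := hF.map_surjective (t₂ ≫ eb.inv)
  have h₁ : F.map (s₀ ≫ w₁) = F.map σ₂ := by
    rw [F.map_comp, hw₁, ← Category.assoc, hcomp]; simp
  have hσw : s₀ ≫ w₁ = σ₂ := hFf.map_injective h₁
  have hst' : F.map s₀ ≫ t₁ = F.map s₀ ≫ t₂ := hst
  have hft' : F.map (φ₁.f ≫ ζ.f) ≫ t₁ = F.map (φ₂.f ≫ ζ.s) ≫ t₂ := hft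
  have hss : s₀ ≫ w₁ = s₀ ≫ w₂ := by
    apply hFf.map_injective
    simp only [F.map_comp, hw₁, hw₂]
    rw [← Category.assoc, ← Category.assoc, hst']
  have hff : (φ₁.f ≫ ζ.f) ≫ w₁ = (φ₂.f ≫ ζ.s) ≫ w₂ := by
    apply hFf.map_injective
    rw [show F.map ((φ₁.f ≫ ζ.f) ≫ w₁) = F.map (φ₁.f ≫ ζ.f) ≫ (t₁ ≫ eb.inv) by
        rw [F.map_comp, hw₁],
      show F.map ((φ₂.f ≫ ζ.s) ≫ w₂) = F.map (φ₂.f ≫ ζ.s) ≫ (t₂ ≫ eb.inv) by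
        rw [F.map_comp, hw₂],
      ← Category.assoc, ← Category.assoc, hft']
  have relC : MorphismProperty.LeftFractionRel χ₁ χ₂ :=
    ⟨l, w₁, w₂, hss, hff, by rw [show χ₁.s ≫ w₁ = s₀ ≫ w₁ from rfl, hσw]; exact hσ₂⟩
  rw [hψ₁, hψ₂]
  exact (MorphismProperty.LeftFraction.map_eq_iff locR S χ₁ χ₂).2 relC
end Final2Sec


/-- **Statement 18.** Let `R` be a graded commutative 2-ring, `S` a homogeneous
multiplicative system in `R`, and `F : R ⥤ A` an `R`-algebra.  Let
`loc_R : R ⥤ S⁻¹R` and `loc_A : A ⥤ S_A⁻¹A` be the localizations, and let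
`F̄ : S⁻¹R ⥤ S_A⁻¹A` be the (unique) functor with `F̄ ∘ loc_R = loc_A ∘ F`.
If `F` is full then `F̄` is full, and if `F` is fully faithful then `F̄` is fully
faithful. -/
theorem localized_functor_full_faithful
    {C : Type u} [Category.{v} C] [Preadditive C] [MonoidalCategory C]
    [SymmetricCategory C] [MonoidalPreadditive C] [GradedComm2Ring C]
    {A : Type u'} [Category.{v'} A] [Preadditive A] [MonoidalCategory A]
    [SymmetricCategory A] [MonoidalPreadditive A]
    (S : MorphismProperty C) (hS : IsHomMulSystem S)
    (F : C ⥤ A) [F.Additive] [F.Monoidal] [F.Braided]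
    {D : Type u''} [Category.{v''} D] {B : Type u₃} [Category.{v₃} B]
    (locR : C ⥤ D) [locR.IsLocalization S]
    (locA : A ⥤ B) [locA.IsLocalization (extSystem F S)]
    (Fbar : D ⥤ B) (hFbar : locR ⋙ Fbar = F ⋙ locA) :
    (F.Full → Fbar.Full) ∧ (F.Full → F.Faithful → Fbar.Full ∧ Fbar.Faithful) := by
  haveI := Localization.essSurj locR S
  have hfull : F.Full → Fbar.Full := by
    intro hF
    refine ⟨fun {X Y} φ => ?_⟩
    obtain ⟨ψ, hψ⟩ := full_core S hS F locR locA Fbar hFbar hF (locR.objPreimage X)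
      (locR.objPreimage Y)
      (eqToHom (obEq F locR locA Fbar hFbar _).symm ≫
        Fbar.map (locR.objObjPreimageIso X).hom ≫ φ ≫
          Fbar.map (locR.objObjPreimageIso Y).inv ≫ eqToHom (obEq F locR locA Fbar hFbar _))
    refine ⟨(locR.objObjPreimageIso X).inv ≫ ψ ≫ (locR.objObjPreimageIso Y).hom, ?_⟩
    rw [Functor.map_comp, Functor.map_comp, hψ]
    simp only [eqToHom_trans_assoc, eqToHom_refl, Category.id_comp, Category.assoc,
      eqToHom_trans]
    rw [← Functor.map_comp_assoc, Iso.inv_hom_id, CategoryTheory.Functor.map_id, Category.id_comp]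
    rw [← Functor.map_comp, Iso.inv_hom_id, CategoryTheory.Functor.map_id, Category.comp_id]
  refine ⟨hfull, fun hF hFf => ⟨hfull hF, ?_⟩⟩
  refine ⟨fun {X Y} f₁ f₂ h => ?_⟩
  have hc := faithful_core S hS F locR locA Fbar hFbar hF hFf
    (locR.objPreimage X) (locR.objPreimage Y)
    ((locR.objObjPreimageIso X).hom ≫ f₁ ≫ (locR.objObjPreimageIso Y).inv)
    ((locR.objObjPreimageIso X).hom ≫ f₂ ≫ (locR.objObjPreimageIso Y).inv)
    (by rw [Functor.map_comp, Functor.map_comp, Functor.map_comp, Functor.map_comp, h])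
  have h2 := (cancel_epi (locR.objObjPreimageIso X).hom).mp hc
  have h3 := (cancel_mono (locR.objObjPreimageIso Y).inv).mp h2
  exact h3
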